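/- Let p be a prime with p ≥ 5, let σ be a p-cycle in the alternating group A_p on p letters, and let 𝒪 be the conjugacy class of σ in A_p. Then: (i) every element τ ∈ 𝒪 that commutes with σ lies in the cyclic subgroup ⟨σ⟩; and (ii) the set 𝒪 ∩ ⟨σ⟩ has exactly (p − 1)/2 elements. -/

import Mathlib

open Equiv Equiv.Perm

/-- The centralizer of a full-support cycle is its cyclic group. -/
lemma aux_mem_zpowers_of_commute {α : Type*} [Fintype α] [DecidableEq α] {c g : Equiv.Perm α}
    (hc : c.IsCycle) (hfull : c.support = Finset.univ) (h : Commute g c) :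
    g ∈ Subgroup.zpowers c := by
  rw [hc.commute_iff] at h
  obtain ⟨hc', hg⟩ := h
  have : Equiv.Perm.ofSubtype (g.subtypePerm hc') = g := by
    apply Equiv.Perm.ofSubtype_subtypePerm
    intro x _
    simp [hfull]
  rwa [this] at hg

/-- the sign of a conjugator is determined. -/
lemma aux_sign_conj_const {α : Type*} [Fintype α] [DecidableEq α] {c x π π' : Equiv.Perm α}
    (hc : c.IsCycle) (hfull : c.support = Finset.univ) (hsgn : Equiv.Perm.sign c = 1)
    (h : π * c * π⁻¹ = x) (h' : π' * c * π'⁻¹ = x) :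
    Equiv.Perm.sign π = Equiv.Perm.sign π' := by
  have hcomm : Commute (π'⁻¹ * π) c := by
    have key : (π'⁻¹ * π) * c * (π'⁻¹ * π)⁻¹ = c := by
      calc π'⁻¹ * π * c * (π'⁻¹ * π)⁻¹ = π'⁻¹ * (π * c * π⁻¹) * π' := by group
        _ = π'⁻¹ * (π' * c * π'⁻¹) * π' := by rw [h, h']
        _ = c := by group
    unfold Commute SemiconjBy
    calc π'⁻¹ * π * c = (π'⁻¹ * π * c * (π'⁻¹ * π)⁻¹) * (π'⁻¹ * π) := by group
      _ = c * (π'⁻¹ * π) := by rw [key]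
  obtain ⟨m, hm⟩ := aux_mem_zpowers_of_commute hc hfull hcomm
  have hs : Equiv.Perm.sign (π'⁻¹ * π) = 1 := by
    rw [← hm]
    simp only []
    rw [map_zpow, hsgn, one_zpow]
  have h2 := Equiv.Perm.sign.map_mul π'⁻¹ π
  rw [hs, map_inv] at h2
  have := mul_eq_one_iff_inv_eq.mp h2.symm
  simp only [inv_inv] at this
  exact this.symm


lemma aux_gen_sign (p : ℕ) [hpi : Fact p.Prime] (hp5 : 5 ≤ p) :
    ∃ g : (ZMod p)ˣ, (∀ x : (ZMod p)ˣ, x ∈ Subgroup.zpowers g) ∧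
      Equiv.Perm.sign (Equiv.mulLeft₀ (g : ZMod p) (Units.ne_zero g)) = -1 := by
  obtain ⟨g, hg⟩ := IsCyclic.exists_generator (α := (ZMod p)ˣ)
  have hg1 : (g : ZMod p) ≠ 1 := by
    intro h
    have hgu : g = 1 := Units.ext h
    have := hg (-1)
    rw [hgu, Subgroup.zpowers_one_eq_bot, Subgroup.mem_bot] at this
    have h2 : ((-1 : (ZMod p)ˣ) : ZMod p) = 1 := by rw [this]; rfl
    simp only [Units.val_neg, Units.val_one] at h2
    haveI : Fact (2 < p) := ⟨by omega⟩
    exact ZMod.neg_one_ne_one h2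
  set μ := Equiv.mulLeft₀ (g : ZMod p) (Units.ne_zero g) with hμ
  have hμapp : ∀ x, μ x = (g : ZMod p) * x := fun x => rfl
  have hμpow : ∀ (n : ℕ) (x : ZMod p), (μ ^ n) x = (g : ZMod p) ^ n * x := by
    intro n
    induction n with
    | zero => intro x; simp
    | succ n ih =>
      intro x
      rw [pow_succ, Equiv.Perm.mul_apply, ih, hμapp, pow_succ]
      ring
  have hfix : ∀ x : ZMod p, μ x = x ↔ x = 0 := by
    intro x
    constructor
    · intro h
      rw [hμapp] at h
      have : ((g : ZMod p) - 1) * x = 0 := by rw [sub_mul, one_mul, h, sub_self]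
      rcases mul_eq_zero.mp this with h1 | h2
      · exact absurd (by linear_combination h1 : (g : ZMod p) = 1) hg1
      · exact h2
    · intro h; rw [h, hμapp, mul_zero]
  have hcycμ : μ.IsCycle := by
    refine ⟨1, ?_, ?_⟩
    · intro h; exact hg1 (by simpa [hμapp] using h)
    · intro y hy
      have hy0 : y ≠ 0 := fun h => hy ((hfix y).mpr h)
      obtain ⟨n, hn⟩ := mem_powers_iff_mem_zpowers.mpr (hg (Units.mk0 y hy0))
      refine ⟨(n : ℤ), ?_⟩
      rw [zpow_natCast, hμpow]
      have hn' : g ^ n = Units.mk0 y hy0 := hn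
      have : ((g ^ n : (ZMod p)ˣ) : ZMod p) = y := by rw [hn']; rfl
      rw [mul_one, ← Units.val_pow_eq_pow_val, this]
  have hsuppμ : μ.support = {(0 : ZMod p)}ᶜ := by
    ext x
    simp only [Equiv.Perm.mem_support, Finset.mem_compl, Finset.mem_singleton]
    exact not_congr (hfix x)
  have hcard : μ.support.card = p - 1 := by
    rw [hsuppμ, Finset.card_compl, Finset.card_singleton, ZMod.card]
  refine ⟨g, hg, ?_⟩
  rw [hcycμ.sign, hcard]
  have hev : Even (p - 1) := by
    have := hpi.out.odd_of_ne_two (by omega)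
    obtain ⟨m, hm⟩ := this
    exact ⟨m, by omega⟩
  rw [hev.neg_one_pow]

lemma aux_odd_conj (p : ℕ) [hpi : Fact p.Prime] (hp5 : 5 ≤ p) (σ' : Equiv.Perm (Fin p))
    (hcyc : σ'.IsCycle) (hfull : σ'.support = Finset.univ) :
    ∃ k : (ZMod p)ˣ, ∃ π : Equiv.Perm (Fin p),
      π * σ' * π⁻¹ = σ' ^ ((k : ZMod p)).val ∧ Equiv.Perm.sign π = -1 := by
  haveI : NeZero p := ⟨by omega⟩
  have horder : orderOf σ' = p := by
    rw [hcyc.orderOf, hfull, Finset.card_univ, Fintype.card_fin]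
  set a : Fin p := ⟨0, by omega⟩ with ha_def
  have ha : σ' a ≠ a := by
    have := Finset.mem_univ a
    rw [← hfull, Equiv.Perm.mem_support] at this
    exact this
  set f : ZMod p → Fin p := fun i => (σ' ^ i.val) a with hf
  have hinj : Function.Injective f := by
    intro i j h
    have hpow : σ' ^ i.val = σ' ^ j.val := hcyc.pow_eq_pow_iff.mpr ⟨a, ha, h⟩
    have hmod : i.val ≡ j.val [MOD p] := by
      have := pow_eq_pow_iff_modEq.mp hpow
      rwa [horder] at this
    have : i.val = j.val := by
      have h1 := ZMod.val_lt i
      have h2 := ZMod.val_lt j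
      have := hmod
      unfold Nat.ModEq at this
      rwa [Nat.mod_eq_of_lt h1, Nat.mod_eq_of_lt h2] at this
    exact ZMod.val_injective p this
  have hbij : Function.Bijective f := by
    have : Fintype.card (ZMod p) = Fintype.card (Fin p) := by
      rw [ZMod.card, Fintype.card_fin]
    exact (Fintype.bijective_iff_injective_and_card f).mpr ⟨hinj, this⟩
  set e : ZMod p ≃ Fin p := Equiv.ofBijective f hbij with he
  have heapp : ∀ j : ZMod p, e j = (σ' ^ j.val) a := fun j => rfl
  have hmodval : ∀ m : ℕ, σ' ^ ((m : ZMod p)).val = σ' ^ m := by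
    intro m
    rw [pow_eq_pow_iff_modEq, horder]
    exact (ZMod.val_natCast p m) ▸ (Nat.mod_modEq m p)
  have estep : ∀ j : ZMod p, σ' (e j) = e (j + 1) := by
    intro j
    rw [heapp, heapp]
    have : σ' ((σ' ^ j.val) a) = (σ' ^ (j.val + 1)) a := by
      rw [pow_succ', Equiv.Perm.mul_apply]
    rw [this]
    congr 1
    have : (σ' ^ ((j.val + 1 : ℕ) : ZMod p).val) = σ' ^ (j.val + 1) := hmodval _
    rw [← this]
    congr 2
    push_cast
    rw [ZMod.natCast_val, ZMod.cast_id]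
  have epow : ∀ (n : ℕ) (j : ZMod p), (σ' ^ n) (e j) = e (j + n) := by
    intro n
    induction n with
    | zero => intro j; simp
    | succ n ih =>
      intro j
      rw [pow_succ, Equiv.Perm.mul_apply, estep, ih]
      congr 1
      push_cast
      ring
  obtain ⟨g, hg, hsgn⟩ := aux_gen_sign p hp5
  set μ := Equiv.mulLeft₀ (g : ZMod p) (Units.ne_zero g) with hμ
  set π := e.permCongr μ with hπ
  have hπapp : ∀ i : ZMod p, π (e i) = e ((g : ZMod p) * i) := by
    intro i
    rw [hπ, Equiv.permCongr_apply, Equiv.symm_apply_apply]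
    rfl
  refine ⟨g, π, ?_, ?_⟩
  · have key : π * σ' = σ' ^ ((g : ZMod p)).val * π := by
      ext x
      obtain ⟨i, rfl⟩ := e.surjective x
      rw [Equiv.Perm.mul_apply, Equiv.Perm.mul_apply, estep, hπapp, hπapp, epow]
      congr 1
      rw [ZMod.natCast_val, ZMod.cast_id]
      ring
    rw [mul_inv_eq_iff_eq_mul, key]
  · rw [hπ, Equiv.Perm.sign_permCongr]; exact hsgn

theorem maximal_abelian_subrack_of_pCycle_class (p : ℕ) (hp : p.Prime) (hp5 : 5 ≤ p)
    (σ : alternatingGroup (Fin p))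
    (hcyc : (σ : Equiv.Perm (Fin p)).IsCycle)
    (hsupp : (σ : Equiv.Perm (Fin p)).support.card = p) :
    (∀ τ ∈ {x : alternatingGroup (Fin p) | IsConj σ x},
        Commute σ τ → τ ∈ Subgroup.zpowers σ) ∧
    Set.ncard ({x : alternatingGroup (Fin p) | IsConj σ x} ∩
        (Subgroup.zpowers σ : Set (alternatingGroup (Fin p)))) = (p - 1) / 2 := by
  classical
  haveI hfact : Fact p.Prime := ⟨hp⟩
  haveI : NeZero p := ⟨by omega⟩
  set σ' : Equiv.Perm (Fin p) := ↑σ with hσ'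
  have hfull : σ'.support = Finset.univ :=
    Finset.eq_univ_of_card _ (by rw [hsupp, Fintype.card_fin])
  have horder : orderOf σ' = p := by rw [hcyc.orderOf, hsupp]
  have hordσ : orderOf σ = p := by rw [← Subgroup.orderOf_coe]; exact horder
  have hsgn1 : Equiv.Perm.sign σ' = 1 := Equiv.Perm.mem_alternatingGroup.mp σ.2
  -- Part (i)
  have part1 : ∀ τ ∈ {x : alternatingGroup (Fin p) | IsConj σ x},
      Commute σ τ → τ ∈ Subgroup.zpowers σ := by
    intro τ _ hcomm
    have hc' : Commute (↑τ : Equiv.Perm (Fin p)) σ' := by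
      have h := congrArg (fun x : alternatingGroup (Fin p) => (x : Equiv.Perm (Fin p)))
        hcomm.symm
      simpa [commute_iff_eq, hσ'] using h
    obtain ⟨m, hm⟩ := aux_mem_zpowers_of_commute hcyc hfull hc'
    refine ⟨m, ?_⟩
    apply Subtype.ext
    have : ((σ ^ m : alternatingGroup (Fin p)) : Equiv.Perm (Fin p)) = σ' ^ m := by push_cast; rfl
    rw [this]
    exact hm
  refine ⟨part1, ?_⟩
  -- Part (ii)
  have hconjS : ∀ k : (ZMod p)ˣ, ∃ π : Equiv.Perm (Fin p),
      π * σ' * π⁻¹ = σ' ^ ((k : ZMod p)).val := by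
    intro k
    have hcop : ((k : ZMod p)).val.Coprime (orderOf σ') := by
      rw [horder]; exact ZMod.val_coe_unit_coprime k
    have h1 : (σ' ^ ((k : ZMod p)).val).IsCycle := hcyc.pow_iff.mpr hcop
    have h2 := Equiv.Perm.support_pow_coprime hcop
    exact isConj_iff.mp (hcyc.isConj h1 (by rw [h2]))
  choose π hπ using hconjS
  have hsignconst : ∀ (k : (ZMod p)ˣ) (τ : Equiv.Perm (Fin p)),
      τ * σ' * τ⁻¹ = σ' ^ ((k : ZMod p)).val → Equiv.Perm.sign τ = Equiv.Perm.sign (π k) :=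
    fun k τ h => aux_sign_conj_const hcyc hfull hsgn1 h (hπ k)
  have hmulkey : ∀ k l : (ZMod p)ˣ,
      (π k * π l) * σ' * (π k * π l)⁻¹ = σ' ^ (((k * l : (ZMod p)ˣ) : ZMod p)).val := by
    intro k l
    have h1 : (π k * π l) * σ' * (π k * π l)⁻¹ = π k * (π l * σ' * (π l)⁻¹) * (π k)⁻¹ := by
      group
    rw [h1, hπ l, ← conj_pow, hπ k, ← pow_mul]
    rw [pow_eq_pow_iff_modEq, horder]
    have : ((k * l : (ZMod p)ˣ) : ZMod p).val = ((k : ZMod p).val * (l : ZMod p).val) % p := by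
      rw [Units.val_mul, ZMod.val_mul]
    rw [this]
    exact (Nat.mod_modEq _ p).symm
  set φ : (ZMod p)ˣ →* ℤˣ := MonoidHom.mk' (fun k => Equiv.Perm.sign (π k)) (by
    intro a b
    show Equiv.Perm.sign (π (a * b)) = Equiv.Perm.sign (π a) * Equiv.Perm.sign (π b)
    rw [← hsignconst (a * b) (π a * π b) (hmulkey a b), map_mul]) with hφ
  have hφapp : ∀ k, φ k = Equiv.Perm.sign (π k) := fun k => rfl
  -- surjectivity
  obtain ⟨g, π₀, hπ₀, hsgnπ₀⟩ := aux_odd_conj p hp5 σ' hcyc hfull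
  have hφg : φ g = -1 := by
    rw [hφapp, ← hsignconst g π₀ hπ₀, hsgnπ₀]
  have hsurj : Function.Surjective φ := by
    intro s
    rcases Int.units_eq_one_or s with rfl | rfl
    · exact ⟨1, map_one φ⟩
    · exact ⟨g, hφg⟩
  have hcardG : Nat.card (ZMod p)ˣ = p - 1 := by
    rw [Nat.card_eq_fintype_card, ZMod.card_units_eq_totient, Nat.totient_prime hp]
  have hindex : φ.ker.index = 2 := by
    rw [Subgroup.index_ker, MonoidHom.range_eq_top.mpr hsurj]
    have h2 : Nat.card (⊤ : Subgroup ℤˣ) = Nat.card ℤˣ :=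
      Nat.card_congr Subgroup.topEquiv.toEquiv
    rw [h2]
    simp
  have hker : Nat.card φ.ker = (p - 1) / 2 := by
    have hmul2 := Subgroup.card_mul_index φ.ker
    rw [hindex, hcardG] at hmul2
    omega
  -- the map u
  set u : (ZMod p)ˣ → alternatingGroup (Fin p) := fun k => σ ^ ((k : ZMod p)).val with hu
  have hu_coe : ∀ k, ((u k : alternatingGroup (Fin p)) : Equiv.Perm (Fin p))
      = σ' ^ ((k : ZMod p)).val := by intro k; push_cast; rfl
  have huinj : Function.Injective u := by
    intro k l h
    have hc : σ' ^ ((k : ZMod p)).val = σ' ^ ((l : ZMod p)).val := by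
      rw [← hu_coe k, ← hu_coe l, h]
    have hmod := pow_eq_pow_iff_modEq.mp hc
    rw [horder] at hmod
    have : ((k : ZMod p)).val = ((l : ZMod p)).val := by
      have h1 := ZMod.val_lt (k : ZMod p)
      have h2 := ZMod.val_lt (l : ZMod p)
      unfold Nat.ModEq at hmod
      rwa [Nat.mod_eq_of_lt h1, Nat.mod_eq_of_lt h2] at hmod
    exact Units.ext (ZMod.val_injective p this)
  have himage : {x : alternatingGroup (Fin p) | IsConj σ x} ∩
      (Subgroup.zpowers σ : Set (alternatingGroup (Fin p))) = u '' {k | φ k = 1} := by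
    ext x
    constructor
    · rintro ⟨hconj, hzp⟩
      obtain ⟨m, hm⟩ := hzp
      have hm' : σ ^ m = x := hm
      have hxne : x ≠ 1 := by
        rintro rfl
        have hσ1 : σ = 1 := isConj_one_right.mp hconj.symm
        exact hcyc.ne_one (by rw [hσ', hσ1]; rfl)
      have hm0 : ((m : ZMod p)) ≠ 0 := by
        intro h0
        rw [ZMod.intCast_zmod_eq_zero_iff_dvd] at h0
        obtain ⟨t, rfl⟩ := h0
        apply hxne
        have hσp : σ ^ p = 1 := by
          have h := pow_orderOf_eq_one σ
          rwa [hordσ] at h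
        rw [← hm', zpow_mul, zpow_natCast, hσp, one_zpow]
      set k : (ZMod p)ˣ := Units.mk0 ((m : ZMod p)) hm0 with hk
      have hkval : ((k : ZMod p)) = (m : ZMod p) := rfl
      have hval : u k = x := by
        rw [hu, ← hm']
        show σ ^ ((k : ZMod p)).val = σ ^ m
        rw [← zpow_natCast]
        rw [zpow_eq_zpow_iff_modEq, hordσ]
        rw [← ZMod.intCast_eq_intCast_iff]
        push_cast
        rw [ZMod.natCast_val, ZMod.cast_id]
        exact hkval
      refine ⟨k, ?_, hval⟩
      obtain ⟨c, hc⟩ := isConj_iff.mp hconj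
      have hc2 : (↑c : Equiv.Perm (Fin p)) * σ' * (↑c : Equiv.Perm (Fin p))⁻¹
          = σ' ^ ((k : ZMod p)).val := by
        have h3 := congrArg (fun y : alternatingGroup (Fin p) => (y : Equiv.Perm (Fin p))) hc
        simp only [Subgroup.coe_mul, InvMemClass.coe_inv] at h3
        rw [hσ', h3, ← hval, hu_coe]
      show φ k = 1
      rw [hφapp, ← hsignconst k _ hc2]
      exact Equiv.Perm.mem_alternatingGroup.mp c.2
    · rintro ⟨k, hk1, rfl⟩
      constructor
      · have hks : Equiv.Perm.sign (π k) = 1 := hk1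
        set τ : alternatingGroup (Fin p) := ⟨π k, Equiv.Perm.mem_alternatingGroup.mpr hks⟩
        refine isConj_iff.mpr ⟨τ, ?_⟩
        apply Subtype.ext
        simp only [Subgroup.coe_mul, InvMemClass.coe_inv]
        rw [hu_coe]
        exact hπ k
      · refine ⟨(((k : ZMod p)).val : ℤ), ?_⟩
        show σ ^ ((((k : ZMod p)).val : ℕ) : ℤ) = u k
        rw [zpow_natCast]
  rw [himage, Set.ncard_image_of_injective _ huinj]
  have hkset : {k : (ZMod p)ˣ | φ k = 1} = (φ.ker : Set (ZMod p)ˣ) := by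
    ext k; simp [MonoidHom.mem_ker]
  rw [hkset, ← Nat.card_coe_set_eq]
  exact hker
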